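/- Let K be a field of characteristic 0 and n ≥ 2. Let F be the field of rational functions K(x₁, …, x_{n−1}), i.e., FractionRing (MvPolynomial (Fin (n−1)) K). Then there exists an injective homomorphism of Lie algebras over K from sl_n(K), the Lie algebra of n × n matrices over K of trace zero, into Der_K(F); moreover it can be chosen so that the F-linear span of its image in Der_K(F) has dimension n − 1 over F. -/

import Mathlib

open MvPolynomial

/-! ### Lifting derivations to the fraction field -/

section Lift

variable {K R : Type*} [CommRing K] [CommRing R] [IsDomain R] [Algebra K R]
variable (F : Type*) [Field F] [Algebra R F] [IsFractionRing R F]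
variable [Algebra K F] [IsScalarTower K R F]

omit [IsDomain R] in
theorem algebraMap_ne_zero' {q : R} (hq : q ≠ 0) : algebraMap R F q ≠ 0 := by
  intro h0
  exact hq (IsFractionRing.injective R F (by simpa using h0))

omit [Algebra K R] [IsScalarTower K R F] in
theorem derivation_ext_fraction {D D' : Derivation K F F}
    (h : ∀ r : R, D (algebraMap R F r) = D' (algebraMap R F r)) : D = D' := by
  ext f
  obtain ⟨p, q, hq, hf⟩ := IsFractionRing.div_surjective (A := R) f
  have hq0 : algebraMap R F q ≠ 0 := algebraMap_ne_zero' F (nonZeroDivisors.ne_zero hq)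
  have hfq : f * algebraMap R F q = algebraMap R F p := by
    rw [← hf, div_mul_cancel₀ _ hq0]
  have h1 := congrArg D hfq
  have h2 := congrArg D' hfq
  rw [Derivation.leibniz] at h1 h2
  rw [h p, h q] at h1
  have h3 := h1.trans h2.symm
  simp only [smul_eq_mul] at h3
  have h4 : (algebraMap R F q) * (D f - D' f) = 0 := by linear_combination h3
  rcases mul_eq_zero.mp h4 with h5 | h5
  · exact absurd h5 hq0
  · exact sub_eq_zero.mp h5

noncomputable def liftFun (d : Derivation K R R) (f : F) : F :=
  (algebraMap R F (d (IsLocalization.sec (nonZeroDivisors R) f).1)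
    - f * algebraMap R F (d ((IsLocalization.sec (nonZeroDivisors R) f).2 : R))) /
    algebraMap R F ((IsLocalization.sec (nonZeroDivisors R) f).2 : R)

theorem liftFun_eq (d : Derivation K R R) (f : F) (p q : R) (hq : q ≠ 0)
    (hf : f * algebraMap R F q = algebraMap R F p) :
    liftFun F d f
      = (algebraMap R F (d p) - f * algebraMap R F (d q)) / algebraMap R F q := by
  set p0 := (IsLocalization.sec (nonZeroDivisors R) f).1 with hp0
  set q0 : R := ((IsLocalization.sec (nonZeroDivisors R) f).2 : R) with hq0def
  have hq00 : q0 ≠ 0 :=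
    nonZeroDivisors.ne_zero (IsLocalization.sec (nonZeroDivisors R) f).2.2
  have hspec : f * algebraMap R F q0 = algebraMap R F p0 := IsLocalization.sec_spec _ f
  have hq0F : algebraMap R F q0 ≠ 0 := algebraMap_ne_zero' F hq00
  have hqF : algebraMap R F q ≠ 0 := algebraMap_ne_zero' F hq
  have cross : p * q0 = p0 * q := by
    apply IsFractionRing.injective R F
    rw [map_mul, map_mul, ← hf, ← hspec]
    ring
  have dcross := congrArg (algebraMap R F) (congrArg d cross)
  rw [Derivation.leibniz, Derivation.leibniz] at dcross
  simp only [smul_eq_mul, map_add, map_mul] at dcross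
  rw [liftFun, ← hp0, ← hq0def, div_eq_div_iff hq0F hqF]
  linear_combination -dcross - (algebraMap R F (d q0)) * hf + (algebraMap R F (d q)) * hspec

theorem liftFun_eq' (d : Derivation K R R) (f y : F) (p q : R) (hq : q ≠ 0)
    (hf : f * algebraMap R F q = algebraMap R F p)
    (hy : y * algebraMap R F q = algebraMap R F (d p) - f * algebraMap R F (d q)) :
    liftFun F d f = y := by
  rw [liftFun_eq F d f p q hq hf, ← hy,
    mul_div_assoc, div_self (algebraMap_ne_zero' F hq), mul_one]

theorem liftFun_spec (d : Derivation K R R) (f : F) (p q : R) (hq : q ≠ 0)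
    (hf : f * algebraMap R F q = algebraMap R F p) :
    liftFun F d f * algebraMap R F q
      = algebraMap R F (d p) - f * algebraMap R F (d q) := by
  rw [liftFun_eq F d f p q hq hf, div_mul_cancel₀ _ (algebraMap_ne_zero' F hq)]

omit [Algebra K R] [Algebra K F] [IsScalarTower K R F] in
theorem exists_rep (f : F) : ∃ p q : R, q ≠ 0 ∧ f * algebraMap R F q = algebraMap R F p := by
  obtain ⟨p, q, hq, hf⟩ := IsFractionRing.div_surjective (A := R) f
  refine ⟨p, q, nonZeroDivisors.ne_zero hq, ?_⟩
  rw [← hf, div_mul_cancel₀ _ (algebraMap_ne_zero' F (nonZeroDivisors.ne_zero hq))]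

omit [IsDomain R] [IsFractionRing R F] in
theorem algebraMap_smul_comm (k : K) (p : R) :
    algebraMap R F (k • p) = k • algebraMap R F p := by
  rw [Algebra.smul_def, map_mul, ← IsScalarTower.algebraMap_apply, ← Algebra.smul_def]

noncomputable def liftDer (d : Derivation K R R) : Derivation K F F where
  toFun := liftFun F d
  map_add' f g := by
    show liftFun F d (f + g) = liftFun F d f + liftFun F d g
    obtain ⟨p, q, hq, hf⟩ := exists_rep (R := R) F f
    obtain ⟨p', q', hq', hg⟩ := exists_rep (R := R) F g
    have h1 := liftFun_spec F d f p q hq hf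
    have h2 := liftFun_spec F d g p' q' hq' hg
    refine liftFun_eq' F d _ _ (p * q' + p' * q) (q * q') (mul_ne_zero hq hq') ?_ ?_
    · simp only [map_add, map_mul]
      linear_combination (algebraMap R F q') * hf + (algebraMap R F q) * hg
    · have e1 : algebraMap R F (d (p * q' + p' * q))
          = algebraMap R F p * algebraMap R F (d q') + algebraMap R F q' * algebraMap R F (d p)
            + algebraMap R F p' * algebraMap R F (d q)
            + algebraMap R F q * algebraMap R F (d p') := by
        rw [map_add, Derivation.leibniz, Derivation.leibniz]
        simp only [smul_eq_mul, map_add, map_mul]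
        ring
      have e2 : algebraMap R F (d (q * q'))
          = algebraMap R F q * algebraMap R F (d q')
            + algebraMap R F q' * algebraMap R F (d q) := by
        rw [Derivation.leibniz]
        simp only [smul_eq_mul, map_add, map_mul]
      rw [e1, e2, map_mul]
      linear_combination (algebraMap R F q') * h1 + (algebraMap R F q) * h2
        + algebraMap R F (d q') * hf + algebraMap R F (d q) * hg
  map_smul' k f := by
    show liftFun F d (k • f) = (RingHom.id K) k • liftFun F d f
    obtain ⟨p, q, hq, hf⟩ := exists_rep (R := R) F f
    have h1 := liftFun_spec F d f p q hq hf
    simp only [RingHom.id_apply]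
    refine liftFun_eq' F d _ _ (k • p) q hq ?_ ?_
    · rw [algebraMap_smul_comm, smul_mul_assoc, hf]
    · rw [d.map_smul, algebraMap_smul_comm, smul_mul_assoc, h1, smul_sub, smul_mul_assoc]
  map_one_eq_zero' := by
    show liftFun F d 1 = 0
    have h : (1 : F) * algebraMap R F 1 = algebraMap R F 1 := by rw [one_mul]
    refine liftFun_eq' F d _ _ 1 1 one_ne_zero h ?_
    simp
  leibniz' f g := by
    show liftFun F d (f * g) = f • liftFun F d g + g • liftFun F d f
    obtain ⟨p, q, hq, hf⟩ := exists_rep (R := R) F f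
    obtain ⟨p', q', hq', hg⟩ := exists_rep (R := R) F g
    have h1 := liftFun_spec F d f p q hq hf
    have h2 := liftFun_spec F d g p' q' hq' hg
    simp only [smul_eq_mul]
    refine liftFun_eq' F d _ _ (p * p') (q * q') (mul_ne_zero hq hq') ?_ ?_
    · rw [map_mul, map_mul]
      linear_combination g * (algebraMap R F q') * hf + (algebraMap R F p) * hg
    · have e1 : algebraMap R F (d (p * p'))
          = algebraMap R F p * algebraMap R F (d p')
            + algebraMap R F p' * algebraMap R F (d p) := by
        rw [Derivation.leibniz]; simp only [smul_eq_mul, map_add, map_mul]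
      have e2 : algebraMap R F (d (q * q'))
          = algebraMap R F q * algebraMap R F (d q')
            + algebraMap R F q' * algebraMap R F (d q) := by
        rw [Derivation.leibniz]; simp only [smul_eq_mul, map_add, map_mul]
      rw [e1, e2, map_mul]
      linear_combination (f * algebraMap R F q) * h2 + (g * algebraMap R F q') * h1
        + (algebraMap R F (d p')) * hf + (algebraMap R F (d p)) * hg

theorem liftDer_apply (d : Derivation K R R) (f : F) : liftDer F d f = liftFun F d f := rfl

@[simp]
theorem liftDer_algebraMap (d : Derivation K R R) (r : R) :
    liftDer F d (algebraMap R F r) = algebraMap R F (d r) := by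
  rw [liftDer_apply]
  refine liftFun_eq' F d _ _ r 1 one_ne_zero (by simp) ?_
  simp

end Lift

/-! ### The polynomial-level construction -/

section Construction

variable (K : Type) [Field K] (m : ℕ)

noncomputable def xt : Fin (m + 1) → MvPolynomial (Fin m) K :=
  Fin.cases 1 fun i => X i

@[simp] theorem xt_zero : xt K m 0 = 1 := rfl
@[simp] theorem xt_succ (i : Fin m) : xt K m i.succ = X i := by simp [xt]

variable {K m}

noncomputable def srow (A : Matrix (Fin (m + 1)) (Fin (m + 1)) K) (k : Fin (m + 1)) :
    MvPolynomial (Fin m) K :=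
  ∑ l, C (A k l) * xt K m l

noncomputable def pfun (A : Matrix (Fin (m + 1)) (Fin (m + 1)) K) (j : Fin m) :
    MvPolynomial (Fin m) K :=
  X j * srow A 0 - srow A j.succ

noncomputable def dmat (A : Matrix (Fin (m + 1)) (Fin (m + 1)) K) :
    Derivation K (MvPolynomial (Fin m) K) (MvPolynomial (Fin m) K) :=
  mkDerivation K (pfun A)

@[simp] theorem dmat_X (A : Matrix (Fin (m + 1)) (Fin (m + 1)) K) (j : Fin m) :
    dmat A (X j) = pfun A j := mkDerivation_X _ _ _

theorem srow_add (A B : Matrix (Fin (m + 1)) (Fin (m + 1)) K) (k : Fin (m + 1)) :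
    srow (A + B) k = srow A k + srow B k := by
  simp [srow, map_add, add_mul, Finset.sum_add_distrib]

theorem srow_sub (A B : Matrix (Fin (m + 1)) (Fin (m + 1)) K) (k : Fin (m + 1)) :
    srow (A - B) k = srow A k - srow B k := by
  simp [srow, map_sub, sub_mul, Finset.sum_sub_distrib]

theorem srow_smul (c : K) (A : Matrix (Fin (m + 1)) (Fin (m + 1)) K) (k : Fin (m + 1)) :
    srow (c • A) k = C c * srow A k := by
  simp [srow, Finset.mul_sum, mul_assoc]

theorem pfun_add (A B : Matrix (Fin (m + 1)) (Fin (m + 1)) K) (j : Fin m) :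
    pfun (A + B) j = pfun A j + pfun B j := by
  simp [pfun, srow_add]; ring

theorem pfun_smul (c : K) (A : Matrix (Fin (m + 1)) (Fin (m + 1)) K) (j : Fin m) :
    pfun (c • A) j = c • pfun A j := by
  rw [smul_eq_C_mul]
  simp [pfun, srow_smul]; ring

theorem dmat_add (A B : Matrix (Fin (m + 1)) (Fin (m + 1)) K) :
    dmat (A + B) = dmat A + dmat B := by
  apply derivation_ext
  intro j
  rw [Derivation.add_apply]
  simp [pfun_add]

theorem dmat_smul (c : K) (A : Matrix (Fin (m + 1)) (Fin (m + 1)) K) :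
    dmat (c • A) = c • dmat A := by
  apply derivation_ext
  intro j
  rw [Derivation.smul_apply]
  simp [pfun_smul]

theorem dmat_xt (A : Matrix (Fin (m + 1)) (Fin (m + 1)) K) (l : Fin (m + 1)) :
    dmat A (xt K m l) = xt K m l * srow A 0 - srow A l := by
  induction l using Fin.cases with
  | zero => simp
  | succ i => simp [pfun]

theorem dmat_srow (A B : Matrix (Fin (m + 1)) (Fin (m + 1)) K) (k : Fin (m + 1)) :
    dmat A (srow B k) = srow B k * srow A 0 - srow (B * A) k := by
  rw [srow, map_sum]
  have step : ∀ l, (dmat A) (C (B k l) * xt K m l)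
      = C (B k l) * (xt K m l * srow A 0 - srow A l) := by
    intro l
    rw [Derivation.leibniz]
    simp [dmat_xt, smul_eq_mul]
  rw [Finset.sum_congr rfl fun l _ => step l]
  have e2 : srow (B * A) k = ∑ l, C (B k l) * srow A l := by
    simp only [srow, Matrix.mul_apply, map_sum, Finset.sum_mul, Finset.mul_sum, map_mul]
    rw [Finset.sum_comm]
    exact Finset.sum_congr rfl fun l _ => Finset.sum_congr rfl fun i _ => by ring
  rw [e2, srow, Finset.sum_mul, ← Finset.sum_sub_distrib]
  exact Finset.sum_congr rfl fun l _ => by ring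

theorem dmat_pfun (A B : Matrix (Fin (m + 1)) (Fin (m + 1)) K) (j : Fin m) :
    dmat A (pfun B j)
      = pfun A j * srow B 0 + X j * (srow B 0 * srow A 0 - srow (B * A) 0)
        - (srow B j.succ * srow A 0 - srow (B * A) j.succ) := by
  rw [pfun, map_sub, Derivation.leibniz]
  simp only [smul_eq_mul, dmat_X, dmat_srow]
  ring

theorem dmat_bracket (A B : Matrix (Fin (m + 1)) (Fin (m + 1)) K) :
    ⁅dmat A, dmat B⁆ = dmat (A * B - B * A) := by
  apply derivation_ext
  intro j
  rw [Derivation.commutator_apply, dmat_X, dmat_X, dmat_X, dmat_pfun, dmat_pfun]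
  simp only [pfun, srow_sub]
  ring

theorem aeval_xt (v : Fin m → K) (l : Fin (m + 1)) :
    aeval v (xt K m l) = Fin.cases 1 v l := by
  induction l using Fin.cases with
  | zero => simp
  | succ i => simp

theorem aeval_srow (v : Fin m → K) (A : Matrix (Fin (m + 1)) (Fin (m + 1)) K)
    (k : Fin (m + 1)) :
    aeval v (srow A k) = A k 0 + ∑ i, A k i.succ * v i := by
  rw [srow, map_sum, Fin.sum_univ_succ]
  simp [aeval_xt]

theorem matrix_eq_zero_of_pfun (A : Matrix (Fin (m + 1)) (Fin (m + 1)) K) [CharZero K]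
    (htr : A.trace = 0) (hp : ∀ j, pfun A j = 0) : A = 0 := by
  have EV : ∀ (v : Fin m → K) (j : Fin m),
      v j * (A 0 0 + ∑ i, A 0 i.succ * v i) = A j.succ 0 + ∑ i, A j.succ i.succ * v i := by
    intro v j
    have h0 := congrArg (aeval v) (hp j)
    rw [pfun, map_sub, map_mul, aeval_X, aeval_srow, aeval_srow, map_zero] at h0
    linear_combination h0
  have h10 : ∀ j : Fin m, A j.succ 0 = 0 := by
    intro j
    have := EV 0 j
    simpa using this.symm
  have EV1 : ∀ (j i : Fin m) (t : K),
      (if j = i then t else 0) * (A 0 0 + A 0 i.succ * t) = A j.succ i.succ * t := by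
    intro j i t
    have := EV (Pi.single i t) j
    rw [h10 j] at this
    simpa [Pi.single_apply, Finset.mul_sum, mul_ite, Finset.sum_ite_eq'] using this
  have hoffdiag : ∀ j i : Fin m, j ≠ i → A j.succ i.succ = 0 := by
    intro j i hne
    have := EV1 j i 1
    simpa [hne] using this.symm
  have h0succ : ∀ j : Fin m, A 0 j.succ = 0 := by
    intro j
    have e1 := EV1 j j 1
    have e2 := EV1 j j 2
    simp only [if_true, eq_self_iff_true, mul_one, one_mul] at e1 e2
    linear_combination e2 / 2 - e1
  have hdiag : ∀ j : Fin m, A j.succ j.succ = A 0 0 := by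
    intro j
    have e1 := EV1 j j 1
    simp only [if_true, eq_self_iff_true, mul_one, one_mul, h0succ j] at e1
    linear_combination -e1
  have h00 : A 0 0 = 0 := by
    have htr' : A 0 0 * ((m : K) + 1) = 0 := by
      rw [← htr, Matrix.trace, Fin.sum_univ_succ]
      rw [Finset.sum_congr rfl fun j _ => (Matrix.diag_apply A j.succ).trans (hdiag j)]
      rw [Finset.sum_const, Finset.card_univ, Fintype.card_fin, nsmul_eq_mul]
      simp only [Matrix.diag_apply]
      ring
    have hm : ((m : K) + 1) ≠ 0 := by
      have := Nat.cast_ne_zero (R := K).mpr (Nat.succ_ne_zero m)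
      push_cast at this
      exact this
    rcases mul_eq_zero.mp htr' with h | h
    · exact h
    · exact absurd h hm
  ext k l
  simp only [Matrix.zero_apply]
  induction k using Fin.cases with
  | zero =>
    induction l using Fin.cases with
    | zero => exact h00
    | succ i => exact h0succ i
  | succ j =>
    induction l using Fin.cases with
    | zero => exact h10 j
    | succ i =>
      by_cases hji : j = i
      · rw [hji, hdiag i, h00]
      · exact hoffdiag j i hji

/-- `pfun` of the elementary matrix `-E_{i+1,0}` is the indicator of `i`. -/
theorem pfun_std (i j : Fin m) :
    pfun (Matrix.single i.succ 0 (-1 : K)) j = if j = i then 1 else 0 := by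
  have hrow0 : srow (Matrix.single i.succ 0 (-1 : K)) 0 = 0 := by
    simp [srow, Matrix.single, Fin.succ_ne_zero i]
  have hrowsucc : srow (Matrix.single i.succ 0 (-1 : K)) j.succ
      = if j = i then C (-1 : K) else 0 := by
    rw [srow, Fin.sum_univ_succ, Finset.sum_eq_zero, add_zero]
    · rcases eq_or_ne j i with h | h
      · simp [Matrix.single, h]
      · simp [Matrix.single, h, Fin.succ_inj, h.symm]
    · intro x _
      simp [Matrix.single, (Fin.succ_ne_zero x).symm]
  rw [pfun, hrow0, hrowsucc]
  by_cases h : j = i <;> simp [h]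

end Construction

/-! ### The fraction-field level -/

section FLevel

theorem derivation_sum_apply {K A M : Type*} [CommSemiring K] [CommSemiring A] [Algebra K A]
    [AddCommMonoid M] [Module K M] [Module A M] {ι : Type*} (s : Finset ι)
    (d : ι → Derivation K A M) (a : A) :
    (∑ i ∈ s, d i) a = ∑ i ∈ s, d i a := by
  induction s using Finset.cons_induction with
  | empty => simp
  | cons i s hi ih => rw [Finset.sum_cons, Finset.sum_cons, Derivation.add_apply, ih]

variable (K : Type) [Field K] [CharZero K] (m : ℕ)

local notation "Rm" => MvPolynomial (Fin m) K
local notation "Fm" => FractionRing (MvPolynomial (Fin m) K)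

noncomputable def Dmat (A : Matrix (Fin (m + 1)) (Fin (m + 1)) K) : Derivation K Fm Fm :=
  liftDer _ (dmat A)

theorem Dmat_algebraMap (A : Matrix (Fin (m + 1)) (Fin (m + 1)) K) (r : Rm) :
    Dmat K m A (algebraMap Rm Fm r) = algebraMap Rm Fm (dmat A r) :=
  liftDer_algebraMap _ _ _

theorem Dmat_add (A B : Matrix (Fin (m + 1)) (Fin (m + 1)) K) :
    Dmat K m (A + B) = Dmat K m A + Dmat K m B := by
  apply derivation_ext_fraction (R := Rm)
  intro r
  rw [Derivation.add_apply, Dmat_algebraMap, Dmat_algebraMap, Dmat_algebraMap, dmat_add,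
    Derivation.add_apply]
  exact map_add (algebraMap Rm Fm) _ _

theorem Dmat_smul (c : K) (A : Matrix (Fin (m + 1)) (Fin (m + 1)) K) :
    Dmat K m (c • A) = c • Dmat K m A := by
  apply derivation_ext_fraction (R := Rm)
  intro r
  rw [Derivation.smul_apply, Dmat_algebraMap, Dmat_algebraMap, dmat_smul,
    Derivation.smul_apply, algebraMap_smul_comm]

theorem Dmat_sub (A B : Matrix (Fin (m + 1)) (Fin (m + 1)) K) :
    Dmat K m (A - B) = Dmat K m A - Dmat K m B := by
  have h : A - B = A + (-1 : K) • B := by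
    rw [neg_one_smul]; abel
  rw [h, Dmat_add, Dmat_smul, neg_one_smul K (Dmat K m B)]
  abel

theorem Dmat_bracket (A B : Matrix (Fin (m + 1)) (Fin (m + 1)) K) :
    ⁅Dmat K m A, Dmat K m B⁆ = Dmat K m (A * B - B * A) := by
  apply derivation_ext_fraction (R := Rm)
  intro r
  rw [Derivation.commutator_apply, Dmat_algebraMap, Dmat_algebraMap, Dmat_algebraMap,
    Dmat_algebraMap, ← map_sub, ← Derivation.commutator_apply, dmat_bracket, Dmat_algebraMap]

noncomputable def del (i : Fin m) : Derivation K Fm Fm :=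
  Dmat K m (Matrix.single i.succ 0 (-1 : K))

theorem del_X (i j : Fin m) :
    del K m i (algebraMap Rm Fm (X j)) = if j = i then 1 else 0 := by
  rw [del, Dmat_algebraMap, dmat_X, pfun_std, apply_ite (algebraMap Rm Fm), map_one, map_zero]

theorem Dmat_eq_sum (A : Matrix (Fin (m + 1)) (Fin (m + 1)) K) :
    Dmat K m A = ∑ j, algebraMap Rm Fm (pfun A j) • del K m j := by
  have hR : dmat A = ∑ j, pfun A j • dmat (Matrix.single j.succ 0 (-1 : K)) := by
    apply derivation_ext
    intro i
    rw [derivation_sum_apply, dmat_X]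
    simp only [Derivation.smul_apply, dmat_X, pfun_std, smul_eq_mul, mul_ite, mul_one, mul_zero]
    rw [Finset.sum_ite_eq Finset.univ i (fun j => pfun A j)]
    simp
  apply derivation_ext_fraction (R := Rm)
  intro r
  rw [Dmat_algebraMap, derivation_sum_apply]
  have : dmat A r = ∑ j, pfun A j * dmat (Matrix.single j.succ 0 (-1 : K)) r := by
    rw [hR, derivation_sum_apply]
    exact Finset.sum_congr rfl fun j _ => by rw [Derivation.smul_apply, smul_eq_mul]
  rw [this, map_sum]
  refine Finset.sum_congr rfl fun j _ => ?_
  rw [Derivation.smul_apply, del, Dmat_algebraMap, smul_eq_mul, map_mul]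

theorem Dmat_eq_zero (A : Matrix (Fin (m + 1)) (Fin (m + 1)) K)
    (htr : A.trace = 0) (h : Dmat K m A = 0) : A = 0 := by
  apply matrix_eq_zero_of_pfun A htr
  intro j
  have h2 : Dmat K m A (algebraMap Rm Fm (X j)) = 0 := by rw [h]; rfl
  rw [Dmat_algebraMap, dmat_X] at h2
  exact IsFractionRing.injective Rm Fm (by rw [h2, map_zero])

theorem del_linearIndependent : LinearIndependent Fm (del K m) := by
  rw [Fintype.linearIndependent_iff]
  intro c hc j
  have h2 : (∑ i, c i • del K m i) (algebraMap Rm Fm (X j)) = 0 := by rw [hc]; rfl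
  rw [derivation_sum_apply] at h2
  simp only [Derivation.smul_apply, del_X, smul_eq_mul, mul_ite, mul_one, mul_zero] at h2
  rwa [Finset.sum_ite_eq Finset.univ j (fun i => c i), if_pos (Finset.mem_univ j)] at h2

set_option maxHeartbeats 1000000 in
noncomputable def phi : LieAlgebra.SpecialLinear.sl (Fin (m + 1)) K →ₗ⁅K⁆ Derivation K Fm Fm where
  toFun A := Dmat K m A.val
  map_add' A B := by
    show Dmat K m ((A + B : LieAlgebra.SpecialLinear.sl (Fin (m + 1)) K) :
        Matrix (Fin (m + 1)) (Fin (m + 1)) K) = Dmat K m A.val + Dmat K m B.val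
    have hco : ((A + B : LieAlgebra.SpecialLinear.sl (Fin (m + 1)) K) :
        Matrix (Fin (m + 1)) (Fin (m + 1)) K) = A.val + B.val := rfl
    rw [hco, Dmat_add]
  map_smul' c A := by
    show Dmat K m ((c • A : LieAlgebra.SpecialLinear.sl (Fin (m + 1)) K) :
        Matrix (Fin (m + 1)) (Fin (m + 1)) K) = (RingHom.id K) c • Dmat K m A.val
    have hco : ((c • A : LieAlgebra.SpecialLinear.sl (Fin (m + 1)) K) :
        Matrix (Fin (m + 1)) (Fin (m + 1)) K) = c • A.val := rfl
    rw [hco, Dmat_smul]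
    rfl
  map_lie' {A B} := by
    show Dmat K m ((⁅A, B⁆ : LieAlgebra.SpecialLinear.sl (Fin (m + 1)) K) :
        Matrix (Fin (m + 1)) (Fin (m + 1)) K) = ⁅Dmat K m A.val, Dmat K m B.val⁆
    have hco := LieAlgebra.SpecialLinear.sl_bracket (n := Fin (m + 1)) (R := K) A B
    rw [hco, ← Dmat_bracket]

theorem phi_injective : Function.Injective (phi K m) := by
  intro A B h
  have h2 : Dmat K m (A.val - B.val) = 0 := by
    rw [Dmat_sub]
    have : Dmat K m A.val = Dmat K m B.val := h
    rw [this, sub_self]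
  have htrA : Matrix.trace A.val = 0 := A.2
  have htrB : Matrix.trace B.val = 0 := B.2
  have htr : Matrix.trace (A.val - B.val) = 0 := by
    rw [Matrix.trace_sub, htrA, htrB, sub_zero]
  have := Dmat_eq_zero K m _ htr h2
  exact Subtype.ext (sub_eq_zero.mp this)

theorem phi_span_finrank :
    Module.finrank Fm (Submodule.span Fm (Set.range
      (phi K m : LieAlgebra.SpecialLinear.sl (Fin (m + 1)) K → Derivation K Fm Fm))) = m := by
  have hspan : Submodule.span Fm (Set.range
      (phi K m : LieAlgebra.SpecialLinear.sl (Fin (m + 1)) K → Derivation K Fm Fm))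
      = Submodule.span Fm (Set.range (del K m)) := by
    apply le_antisymm
    · rw [Submodule.span_le]
      rintro D ⟨A, rfl⟩
      show Dmat K m A.val ∈ _
      rw [Dmat_eq_sum]
      exact Submodule.sum_mem _ fun j _ =>
        Submodule.smul_mem _ _ (Submodule.subset_span ⟨j, rfl⟩)
    · rw [Submodule.span_le]
      rintro D ⟨i, rfl⟩
      apply Submodule.subset_span
      refine ⟨⟨Matrix.single i.succ 0 (-1 : K), ?_⟩, rfl⟩
      exact LinearMap.mem_ker.mpr
        (Matrix.trace_single_eq_of_ne i.succ 0 (-1 : K) (Fin.succ_ne_zero i))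
  rw [hspan, finrank_span_eq_card (del_linearIndependent K m), Fintype.card_fin]

end FLevel


/-- Let `K` be a field of characteristic `0` and `n ≥ 2`.  Let `F = K(x₁, …, x_{n-1})` be the
field of rational functions in `n - 1` variables over `K`.  Then there exists an injective
homomorphism of Lie algebras over `K` from `sl_n(K)` into `Der_K(F)`, which moreover can be
chosen so that the `F`-linear span of its image in `Der_K(F)` has dimension `n - 1` over `F`. -/
theorem sl_injection_into_derivations
    (K : Type) [Field K] [CharZero K] (n : ℕ) (hn : 2 ≤ n) :
    ∃ φ : LieAlgebra.SpecialLinear.sl (Fin n) K →ₗ⁅K⁆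
        Derivation K (FractionRing (MvPolynomial (Fin (n - 1)) K))
          (FractionRing (MvPolynomial (Fin (n - 1)) K)),
      Function.Injective φ ∧
      Module.finrank (FractionRing (MvPolynomial (Fin (n - 1)) K))
        (Submodule.span (FractionRing (MvPolynomial (Fin (n - 1)) K))
          (Set.range (φ : LieAlgebra.SpecialLinear.sl (Fin n) K →
            Derivation K (FractionRing (MvPolynomial (Fin (n - 1)) K))
              (FractionRing (MvPolynomial (Fin (n - 1)) K))))) = n - 1 := by
  obtain ⟨m, rfl⟩ : ∃ m, n = m + 1 := ⟨n - 1, by omega⟩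
  simp only [Nat.add_sub_cancel]
  exact ⟨phi K m, phi_injective K m, phi_span_finrank K m⟩
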